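/- The map B induces a homeomorphism φ : S³/Q₈ → SO₃(ℝ)/T(ℝ) between the coset spaces (each equipped with the quotient topology), satisfying φ(qQ₈) = B(q)T(ℝ) for every unit quaternion q. -/

import Mathlib

open Quaternion Metric

noncomputable section

/-- The real quaternions. -/
abbrev H := Quaternion ℝ

/-- The group `S³` of unit quaternions. -/
abbrev S3 := Metric.sphere (0 : H) 1

lemma mem_S3 (a : H) (h : Quaternion.normSq a = 1) : a ∈ Metric.sphere (0 : H) 1 := by
  rw [mem_sphere_zero_iff_norm]
  have h2 : ‖a‖ * ‖a‖ = 1 := by rw [← Quaternion.normSq_eq_norm_mul_self, h]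
  nlinarith [norm_nonneg a]

/-- `i` as a unit quaternion. -/
def qi : S3 := ⟨⟨0,1,0,0⟩, mem_S3 _ (by refine (Quaternion.normSq_def' _).trans ?_; simp)⟩
/-- `j` as a unit quaternion. -/
def qj : S3 := ⟨⟨0,0,1,0⟩, mem_S3 _ (by refine (Quaternion.normSq_def' _).trans ?_; simp)⟩
/-- `k` as a unit quaternion. -/
def qk : S3 := ⟨⟨0,0,0,1⟩, mem_S3 _ (by refine (Quaternion.normSq_def' _).trans ?_; simp)⟩

lemma sq2 : (Real.sqrt 2)⁻¹ ^ 2 = 1/2 := by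
  rw [inv_pow, Real.sq_sqrt (by norm_num : (2:ℝ) ≥ 0)]
  norm_num

/-- `τᵢ = (1+i)/√2` as a unit quaternion. -/
def τi : S3 := ⟨⟨(Real.sqrt 2)⁻¹, (Real.sqrt 2)⁻¹, 0, 0⟩,
  mem_S3 _ (by refine (Quaternion.normSq_def' _).trans ?_; simp [sq2]; norm_num)⟩
/-- `τⱼ = (1+j)/√2` as a unit quaternion. -/
def τj : S3 := ⟨⟨(Real.sqrt 2)⁻¹, 0, (Real.sqrt 2)⁻¹, 0⟩,
  mem_S3 _ (by refine (Quaternion.normSq_def' _).trans ?_; simp [sq2]; norm_num)⟩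
/-- `τₖ = (1+k)/√2` as a unit quaternion. -/
def τk : S3 := ⟨⟨(Real.sqrt 2)⁻¹, 0, 0, (Real.sqrt 2)⁻¹⟩,
  mem_S3 _ (by refine (Quaternion.normSq_def' _).trans ?_; simp [sq2]; norm_num)⟩

/-- `ω₀ = (1+i+j+k)/2` as a unit quaternion. -/
def ω0 : S3 := ⟨⟨1/2, 1/2, 1/2, 1/2⟩, mem_S3 _ (by refine (Quaternion.normSq_def' _).trans ?_; norm_num)⟩
/-- `ωᵢ = (1−i+j+k)/2` as a unit quaternion. -/
def ωi : S3 := ⟨⟨1/2, -(1/2), 1/2, 1/2⟩, mem_S3 _ (by refine (Quaternion.normSq_def' _).trans ?_; norm_num)⟩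
/-- `ωⱼ = (1+i−j+k)/2` as a unit quaternion. -/
def ωj : S3 := ⟨⟨1/2, 1/2, -(1/2), 1/2⟩, mem_S3 _ (by refine (Quaternion.normSq_def' _).trans ?_; norm_num)⟩
/-- `ωₖ = (1+i+j−k)/2` as a unit quaternion. -/
def ωk : S3 := ⟨⟨1/2, 1/2, 1/2, -(1/2)⟩, mem_S3 _ (by refine (Quaternion.normSq_def' _).trans ?_; norm_num)⟩

/-- The quaternion group `Q₈`, the subgroup of `S³` generated by `i` and `j`. -/
def Q8 : Subgroup S3 := Subgroup.closure {qi, qj}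
/-- The binary octahedral group `O`, the subgroup of `S³` generated by `(1+i)/√2` and `(1+j)/√2`. -/
def Oct : Subgroup S3 := Subgroup.closure {τi, τj}

/-- The standard covering map `B` from (unit) quaternions to rotation matrices:
`q = a+bi+cj+dk` is sent to the matrix of the rotation `v ↦ q v q̄` of the space of pure
quaternions in the basis `(i,j,k)`. -/
def Bmat (q : H) : Matrix (Fin 3) (Fin 3) ℝ :=
  !![q.re^2 + q.imI^2 - q.imJ^2 - q.imK^2, 2*(q.imI*q.imJ - q.re*q.imK),
       2*(q.imI*q.imK + q.re*q.imJ);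
     2*(q.imI*q.imJ + q.re*q.imK), q.re^2 - q.imI^2 + q.imJ^2 - q.imK^2,
       2*(q.imJ*q.imK - q.re*q.imI);
     2*(q.imI*q.imK - q.re*q.imJ), 2*(q.imJ*q.imK + q.re*q.imI),
       q.re^2 - q.imI^2 - q.imJ^2 + q.imK^2]

/-- `SO₃(ℝ)` as a subgroup of the orthogonal group: the kernel of the determinant. -/
def SO3 : Subgroup ↥(Matrix.orthogonalGroup (Fin 3) ℝ) :=
  MonoidHom.ker (Matrix.detMonoidHom.comp (Matrix.orthogonalGroup (Fin 3) ℝ).subtype)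

/-- The subgroup `T(ℝ)` of diagonal matrices in `SO₃(ℝ)`. -/
def Tdiag : Subgroup ↥SO3 where
  carrier := {A | (((A : ↥(Matrix.orthogonalGroup (Fin 3) ℝ)) :
    Matrix (Fin 3) (Fin 3) ℝ)).IsDiag}
  one_mem' := Matrix.isDiag_one
  mul_mem' := by
    intro a b ha hb i j hij
    rw [Subgroup.coe_mul, Submonoid.coe_mul, Matrix.mul_apply]
    refine Finset.sum_eq_zero fun k _ => ?_
    by_cases hk : i = k
    · subst hk; rw [hb hij, mul_zero]
    · rw [ha hk, zero_mul]
  inv_mem' := by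
    intro a ha
    have h1 : ((((a⁻¹ : ↥SO3) : ↥(Matrix.orthogonalGroup (Fin 3) ℝ))) :
        Matrix (Fin 3) (Fin 3) ℝ)
        = star (((a : ↥(Matrix.orthogonalGroup (Fin 3) ℝ)) : Matrix (Fin 3) (Fin 3) ℝ)) :=
      rfl
    show Matrix.IsDiag _
    rw [h1]
    exact ha.conjTranspose


lemma Bmat_mul (g h : H) : Bmat (g * h) = Bmat g * Bmat h := by
  ext i j
  fin_cases i <;> fin_cases j <;>
    simp [Bmat, Matrix.mul_apply, Fin.sum_univ_three, Quaternion.re_mul, Quaternion.imI_mul,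
      Quaternion.imJ_mul, Quaternion.imK_mul] <;> ring

lemma Bmat_one : Bmat 1 = 1 := by
  ext i j
  fin_cases i <;> fin_cases j <;>
    simp [Bmat, Matrix.one_apply, Matrix.vecHead, Matrix.vecTail]

open Matrix in
lemma Bmat_orth {g : H} (h : Quaternion.normSq g = 1) :
    Bmat g * (Bmat g)ᵀ = 1 := by
  rw [Quaternion.normSq_def'] at h
  ext i j
  fin_cases i <;> fin_cases j <;>
    simp [Bmat, Matrix.mul_apply, Fin.sum_univ_three, Matrix.one_apply, Matrix.vecHead,
      Matrix.vecTail] <;>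
    first
      | linear_combination (g.re ^ 2 + g.imI ^ 2 + g.imJ ^ 2 + g.imK ^ 2 + 1) * h
      | ring
open Matrix in
lemma Bmat_orth' {g : H} (h : Quaternion.normSq g = 1) :
    (Bmat g)ᵀ * Bmat g = 1 := by
  rw [Quaternion.normSq_def'] at h
  ext i j
  fin_cases i <;> fin_cases j <;>
    simp [Bmat, Matrix.mul_apply, Fin.sum_univ_three, Matrix.one_apply, Matrix.vecHead,
      Matrix.vecTail] <;>
    first
      | linear_combination (g.re ^ 2 + g.imI ^ 2 + g.imJ ^ 2 + g.imK ^ 2 + 1) * h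
      | ring

lemma Bmat_det {g : H} (h : Quaternion.normSq g = 1) : (Bmat g).det = 1 := by
  rw [Quaternion.normSq_def'] at h
  rw [Matrix.det_fin_three]
  simp [Bmat, Matrix.vecHead, Matrix.vecTail]
  linear_combination ((g.re ^ 2 + g.imI ^ 2 + g.imJ ^ 2 + g.imK ^ 2) ^ 2 +
    (g.re ^ 2 + g.imI ^ 2 + g.imJ ^ 2 + g.imK ^ 2) + 1) * h

lemma normSq_coe (q : S3) : Quaternion.normSq (q : H) = 1 := by
  have h := mem_sphere_zero_iff_norm.1 q.2
  have := Quaternion.normSq_eq_norm_mul_self (a := (q : H))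
  rw [h] at this; simpa using this

lemma Bmat_mem_orth (q : S3) : Bmat (q : H) ∈ Matrix.orthogonalGroup (Fin 3) ℝ := by
  rw [Matrix.mem_orthogonalGroup_iff]
  have := Bmat_orth (normSq_coe q)
  simpa [Matrix.star_eq_conjTranspose] using this

/-- `B` as a group homomorphism `S³ →* SO₃`. -/
def Bhom : S3 →* ↥SO3 where
  toFun q := ⟨⟨Bmat (q : H), Bmat_mem_orth q⟩, by
    simp only [SO3, MonoidHom.mem_ker, MonoidHom.comp_apply, Subgroup.coe_subtype,
      Matrix.coe_detMonoidHom]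
    exact Bmat_det (normSq_coe q)⟩
  map_one' := by
    refine Subtype.ext (Subtype.ext ?_)
    show Bmat ((1 : S3) : H) = (1 : Matrix (Fin 3) (Fin 3) ℝ)
    rw [Metric.unitSphere.coe_one, Bmat_one]
  map_mul' g h := by
    refine Subtype.ext (Subtype.ext ?_)
    show Bmat ((g * h : S3) : H) = Bmat (g : H) * Bmat (h : H)
    rw [Metric.unitSphere.coe_mul, Bmat_mul]
lemma diag_cases {g : H} (hn : Quaternion.normSq g = 1) (hd : (Bmat g).IsDiag) :
    g = ⟨1,0,0,0⟩ ∨ g = ⟨-1,0,0,0⟩ ∨ g = ⟨0,1,0,0⟩ ∨ g = ⟨0,-1,0,0⟩ ∨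
      g = ⟨0,0,1,0⟩ ∨ g = ⟨0,0,-1,0⟩ ∨ g = ⟨0,0,0,1⟩ ∨ g = ⟨0,0,0,-1⟩ := by
  rw [Quaternion.normSq_def'] at hn
  obtain ⟨a, b, c, d⟩ := g
  simp only [] at hn ⊢
  have h01 : 2*(b*c - a*d) = 0 := by
    have := hd (show (0 : Fin 3) ≠ 1 by decide)
    simpa [Bmat, Matrix.vecHead, Matrix.vecTail] using this
  have h10 : 2*(b*c + a*d) = 0 := by
    have := hd (show (1 : Fin 3) ≠ 0 by decide)
    simpa [Bmat, Matrix.vecHead, Matrix.vecTail] using this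
  have h02 : 2*(b*d + a*c) = 0 := by
    have := hd (show (0 : Fin 3) ≠ 2 by decide)
    simpa [Bmat, Matrix.vecHead, Matrix.vecTail] using this
  have h20 : 2*(b*d - a*c) = 0 := by
    have := hd (show (2 : Fin 3) ≠ 0 by decide)
    simpa [Bmat, Matrix.vecHead, Matrix.vecTail] using this
  have h12 : 2*(c*d - a*b) = 0 := by
    have := hd (show (1 : Fin 3) ≠ 2 by decide)
    simpa [Bmat, Matrix.vecHead, Matrix.vecTail] using this
  have h21 : 2*(c*d + a*b) = 0 := by
    have := hd (show (2 : Fin 3) ≠ 1 by decide)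
    simpa [Bmat, Matrix.vecHead, Matrix.vecTail] using this
  have hab : a*b = 0 := by linarith
  have hac : a*c = 0 := by linarith
  have had : a*d = 0 := by linarith
  have hbc : b*c = 0 := by linarith
  have hbd : b*d = 0 := by linarith
  have hcd : c*d = 0 := by linarith
  have sq1 : ∀ y : ℝ, y^2 = 1 → y = 1 ∨ y = -1 := by
    intro y h
    rcases mul_eq_zero.mp (show (y-1)*(y+1) = 0 by nlinarith) with h' | h'
    · left; linarith
    · right; linarith
  have zmul : ∀ y z : ℝ, y ≠ 0 → y * z = 0 → z = 0 := by
    intro y z hy h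
    rcases mul_eq_zero.mp h with h' | h'
    · exact absurd h' hy
    · exact h'
  by_cases ha : a = 0
  · by_cases hb : b = 0
    · by_cases hc : c = 0
      · subst ha hb hc
        rcases sq1 d (by nlinarith) with h | h <;> subst h <;> tauto
      · have hd0 : d = 0 := zmul c d hc hcd
        subst ha hb hd0
        rcases sq1 c (by nlinarith) with h | h <;> subst h <;> tauto
    · have hc0 : c = 0 := zmul b c hb hbc
      have hd0 : d = 0 := zmul b d hb hbd
      subst ha hc0 hd0
      rcases sq1 b (by nlinarith) with h | h <;> subst h <;> tauto
  · have hb0 : b = 0 := zmul a b ha hab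
    have hc0 : c = 0 := zmul a c ha hac
    have hd0 : d = 0 := zmul a d ha had
    subst hb0 hc0 hd0
    rcases sq1 a (by nlinarith) with h | h <;> subst h <;> tauto
lemma qi_mem : qi ∈ Q8 := Subgroup.subset_closure (by simp)
lemma qj_mem : qj ∈ Q8 := Subgroup.subset_closure (by simp)

lemma mem_Q8_of_coe (x : S3) (h : (x : H) = ⟨1,0,0,0⟩ ∨ (x : H) = ⟨-1,0,0,0⟩ ∨
    (x : H) = ⟨0,1,0,0⟩ ∨ (x : H) = ⟨0,-1,0,0⟩ ∨ (x : H) = ⟨0,0,1,0⟩ ∨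
    (x : H) = ⟨0,0,-1,0⟩ ∨ (x : H) = ⟨0,0,0,1⟩ ∨ (x : H) = ⟨0,0,0,-1⟩) : x ∈ Q8 := by
  have e2 : ((qi * qi : S3) : H) = ⟨-1,0,0,0⟩ := by
    rw [Metric.unitSphere.coe_mul]
    show ((⟨0,1,0,0⟩ : H) * ⟨0,1,0,0⟩) = _
    rw [QuaternionAlgebra.mk_mul_mk]; norm_num
  have e3 : ((qi * qi * qi : S3) : H) = ⟨0,-1,0,0⟩ := by
    rw [Metric.unitSphere.coe_mul, e2]
    show ((⟨-1,0,0,0⟩ : H) * ⟨0,1,0,0⟩) = _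
    rw [QuaternionAlgebra.mk_mul_mk]; norm_num
  have e5 : ((qi * qi * qj : S3) : H) = ⟨0,0,-1,0⟩ := by
    rw [Metric.unitSphere.coe_mul, e2]
    show ((⟨-1,0,0,0⟩ : H) * ⟨0,0,1,0⟩) = _
    rw [QuaternionAlgebra.mk_mul_mk]; norm_num
  have e6 : ((qi * qj : S3) : H) = ⟨0,0,0,1⟩ := by
    rw [Metric.unitSphere.coe_mul]
    show ((⟨0,1,0,0⟩ : H) * ⟨0,0,1,0⟩) = _
    rw [QuaternionAlgebra.mk_mul_mk]; norm_num
  have e7 : ((qj * qi : S3) : H) = ⟨0,0,0,-1⟩ := by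
    rw [Metric.unitSphere.coe_mul]
    show ((⟨0,0,1,0⟩ : H) * ⟨0,1,0,0⟩) = _
    rw [QuaternionAlgebra.mk_mul_mk]; norm_num
  rcases h with h | h | h | h | h | h | h | h
  · have : x = 1 := Subtype.ext (by rw [h, Metric.unitSphere.coe_one]; ext <;> simp)
    rw [this]; exact one_mem Q8
  · have : x = qi * qi := Subtype.ext (by rw [h, e2])
    rw [this]; exact mul_mem qi_mem qi_mem
  · have : x = qi := Subtype.ext (by rw [h]; rfl)
    rw [this]; exact qi_mem
  · have : x = qi * qi * qi := Subtype.ext (by rw [h, e3])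
    rw [this]; exact mul_mem (mul_mem qi_mem qi_mem) qi_mem
  · have : x = qj := Subtype.ext (by rw [h]; rfl)
    rw [this]; exact qj_mem
  · have : x = qi * qi * qj := Subtype.ext (by rw [h, e5])
    rw [this]; exact mul_mem (mul_mem qi_mem qi_mem) qj_mem
  · have : x = qi * qj := Subtype.ext (by rw [h, e6])
    rw [this]; exact mul_mem qi_mem qj_mem
  · have : x = qj * qi := Subtype.ext (by rw [h, e7])
    rw [this]; exact mul_mem qj_mem qi_mem

lemma mem_Tdiag_iff {R : ↥SO3} : R ∈ Tdiag ↔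
    (((R : ↥(Matrix.orthogonalGroup (Fin 3) ℝ)) : Matrix (Fin 3) (Fin 3) ℝ)).IsDiag :=
  Iff.rfl

lemma Bhom_mem_Tdiag_iff (x : S3) : Bhom x ∈ Tdiag ↔ x ∈ Q8 := by
  constructor
  · intro h
    refine mem_Q8_of_coe x (diag_cases (normSq_coe x) ?_)
    exact mem_Tdiag_iff.mp h
  · intro hx
    revert x
    have : Q8 ≤ Subgroup.comap Bhom Tdiag := by
      rw [Q8, Subgroup.closure_le]
      rintro z hz
      simp only [Set.mem_insert_iff, Set.mem_singleton_iff] at hz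
      have hdiag : ∀ y : S3, ((y : H) = ⟨0,1,0,0⟩ ∨ (y : H) = ⟨0,0,1,0⟩) → Bhom y ∈ Tdiag := by
        rintro y hy
        rw [mem_Tdiag_iff]
        intro i j hij
        show Bmat (y : H) i j = 0
        rcases hy with hy | hy <;> rw [hy] <;>
          fin_cases i <;> fin_cases j <;>
            simp_all [Bmat, Matrix.vecHead, Matrix.vecTail]
      rcases hz with hz | hz
      · exact hdiag z (Or.inl (by rw [hz]; rfl))
      · exact hdiag z (Or.inr (by rw [hz]; rfl))
    intro x hx
    exact this hx
instance orthTopGrp : IsTopologicalGroup ↥(Matrix.orthogonalGroup (Fin 3) ℝ) where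
  continuous_mul := by
    apply Continuous.subtype_mk
      (f := fun p : ↥(Matrix.orthogonalGroup (Fin 3) ℝ) × ↥(Matrix.orthogonalGroup (Fin 3) ℝ) =>
        (p.1 : Matrix (Fin 3) (Fin 3) ℝ) * (p.2 : Matrix (Fin 3) (Fin 3) ℝ))
    exact (continuous_subtype_val.comp continuous_fst).matrix_mul
      (continuous_subtype_val.comp continuous_snd)
  continuous_inv := by
    apply Continuous.subtype_mk
      (f := fun p : ↥(Matrix.orthogonalGroup (Fin 3) ℝ) =>
        star (p : Matrix (Fin 3) (Fin 3) ℝ))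
    exact continuous_star.comp continuous_subtype_val

lemma matval_continuous : Continuous
    (fun A : ↥SO3 => ((A : ↥(Matrix.orthogonalGroup (Fin 3) ℝ)) : Matrix (Fin 3) (Fin 3) ℝ)) :=
  continuous_subtype_val.comp continuous_subtype_val

lemma Tdiag_isClosed : IsClosed (Tdiag : Set ↥SO3) := by
  have : (Tdiag : Set ↥SO3) = ⋂ (i : Fin 3) (j : Fin 3) (_ : i ≠ j),
      {A : ↥SO3 | ((A : ↥(Matrix.orthogonalGroup (Fin 3) ℝ)) : Matrix (Fin 3) (Fin 3) ℝ) i j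
        = 0} := by
    ext A
    simp only [Set.mem_iInter, Set.mem_setOf_eq]
    constructor
    · intro h i j hij; exact h hij
    · intro h i j hij; exact h i j hij
  rw [this]
  refine isClosed_iInter fun i => isClosed_iInter fun j => isClosed_iInter fun _ => ?_
  exact isClosed_eq ((continuous_apply j).comp ((continuous_apply i).comp matval_continuous))
    continuous_const

lemma t2_quot : T2Space (↥SO3 ⧸ Tdiag) := by
  rw [t2_iff_isClosed_diagonal]
  rw [← isOpen_compl_iff]
  have hopen : IsOpen {z : ↥SO3 × ↥SO3 | z.1⁻¹ * z.2 ∉ Tdiag} := by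
    have : {z : ↥SO3 × ↥SO3 | z.1⁻¹ * z.2 ∉ Tdiag}
        = (fun z : ↥SO3 × ↥SO3 => z.1⁻¹ * z.2) ⁻¹' ((Tdiag : Set ↥SO3)ᶜ) := rfl
    rw [this]
    exact (Tdiag_isClosed.isOpen_compl).preimage
      ((continuous_fst.inv).mul continuous_snd)
  have hmap : IsOpenMap (Prod.map (QuotientGroup.mk : ↥SO3 → ↥SO3 ⧸ Tdiag)
      (QuotientGroup.mk : ↥SO3 → ↥SO3 ⧸ Tdiag)) :=
    QuotientGroup.isOpenMap_coe.prodMap QuotientGroup.isOpenMap_coe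
  have heq : (Set.diagonal (↥SO3 ⧸ Tdiag))ᶜ = Prod.map QuotientGroup.mk QuotientGroup.mk ''
      {z : ↥SO3 × ↥SO3 | z.1⁻¹ * z.2 ∉ Tdiag} := by
    ext ⟨u, v⟩
    simp only [Set.mem_compl_iff, Set.mem_diagonal_iff, Set.mem_image, Prod.exists,
      Prod.map_apply, Prod.mk.injEq]
    constructor
    · intro huv
      obtain ⟨xx, rfl⟩ := QuotientGroup.mk_surjective u
      obtain ⟨yy, rfl⟩ := QuotientGroup.mk_surjective v
      exact ⟨xx, yy, fun hmem => huv (QuotientGroup.eq.mpr hmem), rfl, rfl⟩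
    · rintro ⟨xx, yy, hne, rfl, rfl⟩ heq'
      exact hne (QuotientGroup.eq.mp heq')
  rw [heq]
  exact hmap _ hopen
lemma Bmat_coe_continuous : Continuous (fun q : S3 => Bmat (q : H)) := by
  apply continuous_matrix
  intro i j
  have hre : Continuous (fun q : S3 => (q : H).re) :=
    Quaternion.continuous_re.comp continuous_subtype_val
  have hi : Continuous (fun q : S3 => (q : H).imI) :=
    Quaternion.continuous_imI.comp continuous_subtype_val
  have hj : Continuous (fun q : S3 => (q : H).imJ) :=
    Quaternion.continuous_imJ.comp continuous_subtype_val
  have hk : Continuous (fun q : S3 => (q : H).imK) :=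
    Quaternion.continuous_imK.comp continuous_subtype_val
  fin_cases i <;> fin_cases j <;>
    simp only [Bmat, Fin.mk_zero, Fin.mk_one, Fin.reduceFinMk, Matrix.cons_val', Matrix.cons_val_zero,
      Matrix.cons_val_one, Matrix.head_cons, Matrix.empty_val', Matrix.cons_val_fin_one,
      Matrix.head_fin_const, Matrix.of_apply, Fin.isValue, Matrix.cons_val_two,
      Matrix.tail_cons] <;>
    fun_prop

lemma Bhom_continuous : Continuous Bhom := by
  apply Continuous.subtype_mk
  apply Continuous.subtype_mk
  exact Bmat_coe_continuous
lemma exists_Bmat_eq_of_pos (M : Matrix (Fin 3) (Fin 3) ℝ)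
    (h1 : M.transpose * M = 1) (h2 : M * M.transpose = 1) (hdet : M.det = 1)
    (htr : 0 < 1 + M 0 0 + M 1 1 + M 2 2) :
    ∃ g : H, Quaternion.normSq g = 1 ∧ Bmat g = M := by
  have hR1 : M 0 0 * M 0 0 + M 0 1 * M 0 1 + M 0 2 * M 0 2 = 1 := by
    have e := congrFun (congrFun h2 0) 0
    simpa [Matrix.mul_apply, Fin.sum_univ_three, Matrix.one_apply] using e
  have hR2 : M 1 0 * M 1 0 + M 1 1 * M 1 1 + M 1 2 * M 1 2 = 1 := by
    have e := congrFun (congrFun h2 1) 1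
    simpa [Matrix.mul_apply, Fin.sum_univ_three, Matrix.one_apply] using e
  have hR3 : M 2 0 * M 2 0 + M 2 1 * M 2 1 + M 2 2 * M 2 2 = 1 := by
    have e := congrFun (congrFun h2 2) 2
    simpa [Matrix.mul_apply, Fin.sum_univ_three, Matrix.one_apply] using e
  have hR4 : M 0 0 * M 1 0 + M 0 1 * M 1 1 + M 0 2 * M 1 2 = 0 := by
    have e := congrFun (congrFun h2 0) 1
    simpa [Matrix.mul_apply, Fin.sum_univ_three, Matrix.one_apply] using e
  have hR5 : M 0 0 * M 2 0 + M 0 1 * M 2 1 + M 0 2 * M 2 2 = 0 := by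
    have e := congrFun (congrFun h2 0) 2
    simpa [Matrix.mul_apply, Fin.sum_univ_three, Matrix.one_apply] using e
  have hR6 : M 1 0 * M 2 0 + M 1 1 * M 2 1 + M 1 2 * M 2 2 = 0 := by
    have e := congrFun (congrFun h2 1) 2
    simpa [Matrix.mul_apply, Fin.sum_univ_three, Matrix.one_apply] using e
  have hC1 : M 0 0 * M 0 0 + M 1 0 * M 1 0 + M 2 0 * M 2 0 = 1 := by
    have e := congrFun (congrFun h1 0) 0
    simpa [Matrix.mul_apply, Fin.sum_univ_three, Matrix.one_apply] using e
  have hC2 : M 0 1 * M 0 1 + M 1 1 * M 1 1 + M 2 1 * M 2 1 = 1 := by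
    have e := congrFun (congrFun h1 1) 1
    simpa [Matrix.mul_apply, Fin.sum_univ_three, Matrix.one_apply] using e
  have hC3 : M 0 2 * M 0 2 + M 1 2 * M 1 2 + M 2 2 * M 2 2 = 1 := by
    have e := congrFun (congrFun h1 2) 2
    simpa [Matrix.mul_apply, Fin.sum_univ_three, Matrix.one_apply] using e
  have hC4 : M 0 0 * M 0 1 + M 1 0 * M 1 1 + M 2 0 * M 2 1 = 0 := by
    have e := congrFun (congrFun h1 0) 1
    simpa [Matrix.mul_apply, Fin.sum_univ_three, Matrix.one_apply] using e
  have hC5 : M 0 0 * M 0 2 + M 1 0 * M 1 2 + M 2 0 * M 2 2 = 0 := by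
    have e := congrFun (congrFun h1 0) 2
    simpa [Matrix.mul_apply, Fin.sum_univ_three, Matrix.one_apply] using e
  have hC6 : M 0 1 * M 0 2 + M 1 1 * M 1 2 + M 2 1 * M 2 2 = 0 := by
    have e := congrFun (congrFun h1 1) 2
    simpa [Matrix.mul_apply, Fin.sum_univ_three, Matrix.one_apply] using e
  have hD : M 0 0 * (M 1 1 * M 2 2 - M 1 2 * M 2 1) - M 0 1 * (M 1 0 * M 2 2 - M 1 2 * M 2 0)
      + M 0 2 * (M 1 0 * M 2 1 - M 1 1 * M 2 0) = 1 := by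
    rw [Matrix.det_fin_three] at hdet
    linear_combination hdet
  have hK1 : (M 1 1)*(M 2 2) - (M 1 2)*(M 2 1) = (M 0 0) := by
    linear_combination (-((M 1 1)*(M 2 2)) + (M 1 2)*(M 2 1))*hR1 + ((M 0 1)*(M 2 2) - (M 0 2)*(M 2 1))*hR4 + (-((M 0 1)*(M 1 2)) + (M 0 2)*(M 1 1))*hR5 + ((M 0 0))*hD
  have hK2 : (M 1 2)*(M 2 0) - (M 1 0)*(M 2 2) = (M 0 1) := by
    linear_combination ((M 1 0)*(M 2 2) - (M 1 2)*(M 2 0))*hR1 + (-((M 0 0)*(M 2 2)) + (M 0 2)*(M 2 0))*hR4 + ((M 0 0)*(M 1 2) - (M 0 2)*(M 1 0))*hR5 + ((M 0 1))*hD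
  have hK3 : (M 1 0)*(M 2 1) - (M 1 1)*(M 2 0) = (M 0 2) := by
    linear_combination (-((M 1 0)*(M 2 1)) + (M 1 1)*(M 2 0))*hR1 + ((M 0 0)*(M 2 1) - (M 0 1)*(M 2 0))*hR4 + (-((M 0 0)*(M 1 1)) + (M 0 1)*(M 1 0))*hR5 + ((M 0 2))*hD
  have hK4 : (M 0 2)*(M 2 1) - (M 0 1)*(M 2 2) = (M 1 0) := by
    linear_combination ((M 0 1)*(M 2 2) - (M 0 2)*(M 2 1))*hR2 + (-((M 1 1)*(M 2 2)) + (M 1 2)*(M 2 1))*hR4 + (-((M 0 1)*(M 1 2)) + (M 0 2)*(M 1 1))*hR6 + ((M 1 0))*hD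
  have hK5 : (M 0 0)*(M 2 2) - (M 0 2)*(M 2 0) = (M 1 1) := by
    linear_combination (-((M 0 0)*(M 2 2)) + (M 0 2)*(M 2 0))*hR2 + ((M 1 0)*(M 2 2) - (M 1 2)*(M 2 0))*hR4 + ((M 0 0)*(M 1 2) - (M 0 2)*(M 1 0))*hR6 + ((M 1 1))*hD
  have hK6 : (M 0 1)*(M 2 0) - (M 0 0)*(M 2 1) = (M 1 2) := by
    linear_combination ((M 0 0)*(M 2 1) - (M 0 1)*(M 2 0))*hR2 + (-((M 1 0)*(M 2 1)) + (M 1 1)*(M 2 0))*hR4 + (-((M 0 0)*(M 1 1)) + (M 0 1)*(M 1 0))*hR6 + ((M 1 2))*hD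
  have hK7 : (M 0 1)*(M 1 2) - (M 0 2)*(M 1 1) = (M 2 0) := by
    linear_combination (-((M 0 1)*(M 1 2)) + (M 0 2)*(M 1 1))*hR3 + (-((M 1 1)*(M 2 2)) + (M 1 2)*(M 2 1))*hR5 + ((M 0 1)*(M 2 2) - (M 0 2)*(M 2 1))*hR6 + ((M 2 0))*hD
  have hK8 : (M 0 2)*(M 1 0) - (M 0 0)*(M 1 2) = (M 2 1) := by
    linear_combination ((M 0 0)*(M 1 2) - (M 0 2)*(M 1 0))*hR3 + ((M 1 0)*(M 2 2) - (M 1 2)*(M 2 0))*hR5 + (-((M 0 0)*(M 2 2)) + (M 0 2)*(M 2 0))*hR6 + ((M 2 1))*hD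
  have hK9 : (M 0 0)*(M 1 1) - (M 0 1)*(M 1 0) = (M 2 2) := by
    linear_combination (-((M 0 0)*(M 1 1)) + (M 0 1)*(M 1 0))*hR3 + (-((M 1 0)*(M 2 1)) + (M 1 1)*(M 2 0))*hR5 + ((M 0 0)*(M 2 1) - (M 0 1)*(M 2 0))*hR6 + ((M 2 2))*hD
  set a : ℝ := Real.sqrt (1 + M 0 0 + M 1 1 + M 2 2) / 2 with hadef
  have ha : 0 < a := by
    rw [hadef]
    positivity
  have ha2 : 4*a^2 = (1 + M 0 0 + M 1 1 + M 2 2) := by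
    rw [hadef, div_pow, Real.sq_sqrt htr.le]
    ring
  set b : ℝ := ((M 2 1) - (M 1 2)) / (4*a) with hbdef
  set c : ℝ := ((M 0 2) - (M 2 0)) / (4*a) with hcdef
  set d : ℝ := ((M 1 0) - (M 0 1)) / (4*a) with hddef
  have hane : (4*a) ≠ 0 := by positivity
  have hb4 : 4*a*b = ((M 2 1) - (M 1 2)) := by rw [hbdef]; field_simp
  have hc4 : 4*a*c = ((M 0 2) - (M 2 0)) := by rw [hcdef]; field_simp
  have hd4 : 4*a*d = ((M 1 0) - (M 0 1)) := by rw [hddef]; field_simp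
  have h16 : (16:ℝ)*a^2 ≠ 0 := by positivity
  have hnorm : a^2 + b^2 + c^2 + d^2 = 1 := by
    refine mul_left_cancel₀ h16 ?_
    linear_combination (4*a^2 + (1 + M 0 0 + M 1 1 + M 2 2) - 4)*ha2 + (4*a*b + ((M 2 1) - (M 1 2)))*hb4 + (4*a*c + ((M 0 2) - (M 2 0)))*hc4 + (4*a*d + ((M 1 0) - (M 0 1)))*hd4 + hR1 + hR2 + hR3 + 2*hK1 + 2*hK5 + 2*hK9
  have hE00 : a^2 + b^2 - c^2 - d^2 = M 0 0 := by
    refine mul_left_cancel₀ h16 ?_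
    linear_combination (4*a^2 + (1 + M 0 0 + M 1 1 + M 2 2) - 4*(M 0 0))*ha2 + (4*a*b + ((M 2 1) - (M 1 2)))*hb4 - ((4*a*c + ((M 0 2) - (M 2 0))))*hc4 - ((4*a*d + ((M 1 0) - (M 0 1))))*hd4 - hR1 + hR2 + hR3 - 2*hC1 + 2*hK1 - 2*hK5 - 2*hK9
  have hE11 : a^2 - b^2 + c^2 - d^2 = M 1 1 := by
    refine mul_left_cancel₀ h16 ?_
    linear_combination (4*a^2 + (1 + M 0 0 + M 1 1 + M 2 2) - 4*(M 1 1))*ha2 - ((4*a*b + ((M 2 1) - (M 1 2))))*hb4 + (4*a*c + ((M 0 2) - (M 2 0)))*hc4 - ((4*a*d + ((M 1 0) - (M 0 1))))*hd4 + hR1 - hR2 + hR3 - 2*hC2 - 2*hK1 + 2*hK5 - 2*hK9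
  have hE22 : a^2 - b^2 - c^2 + d^2 = M 2 2 := by
    refine mul_left_cancel₀ h16 ?_
    linear_combination (4*a^2 + (1 + M 0 0 + M 1 1 + M 2 2) - 4*(M 2 2))*ha2 - ((4*a*b + ((M 2 1) - (M 1 2))))*hb4 - ((4*a*c + ((M 0 2) - (M 2 0))))*hc4 + (4*a*d + ((M 1 0) - (M 0 1)))*hd4 - hR1 - hR2 - 3*hR3 + 2*hC1 + 2*hC2 - 2*hK1 - 2*hK5 + 2*hK9
  have hE01 : 2*(b*c - a*d) = M 0 1 := by
    refine mul_left_cancel₀ h16 ?_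
    linear_combination (8*a*b)*hc4 + 2*((M 0 2) - (M 2 0))*hb4 - (8*a^2)*hd4 + (-2*((M 1 0) - (M 0 1)) - 4*(M 0 1))*ha2 - 2*hR4 - 2*hC4 + 2*hK2 + 2*hK4
  have hE10 : 2*(b*c + a*d) = M 1 0 := by
    refine mul_left_cancel₀ h16 ?_
    linear_combination (8*a*b)*hc4 + 2*((M 0 2) - (M 2 0))*hb4 + (8*a^2)*hd4 + (2*((M 1 0) - (M 0 1)) - 4*(M 1 0))*ha2 - 2*hR4 - 2*hC4 + 2*hK2 + 2*hK4
  have hE02 : 2*(b*d + a*c) = M 0 2 := by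
    refine mul_left_cancel₀ h16 ?_
    linear_combination (8*a*b)*hd4 + 2*((M 1 0) - (M 0 1))*hb4 + (8*a^2)*hc4 + (2*((M 0 2) - (M 2 0)) - 4*(M 0 2))*ha2 - 2*hR5 - 2*hC5 + 2*hK3 + 2*hK7
  have hE20 : 2*(b*d - a*c) = M 2 0 := by
    refine mul_left_cancel₀ h16 ?_
    linear_combination (8*a*b)*hd4 + 2*((M 1 0) - (M 0 1))*hb4 - (8*a^2)*hc4 + (-2*((M 0 2) - (M 2 0)) - 4*(M 2 0))*ha2 - 2*hR5 - 2*hC5 + 2*hK3 + 2*hK7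
  have hE12 : 2*(c*d - a*b) = M 1 2 := by
    refine mul_left_cancel₀ h16 ?_
    linear_combination (8*a*c)*hd4 + 2*((M 1 0) - (M 0 1))*hc4 - (8*a^2)*hb4 + (-2*((M 2 1) - (M 1 2)) - 4*(M 1 2))*ha2 - 2*hR6 - 2*hC6 + 2*hK6 + 2*hK8
  have hE21 : 2*(c*d + a*b) = M 2 1 := by
    refine mul_left_cancel₀ h16 ?_
    linear_combination (8*a*c)*hd4 + 2*((M 1 0) - (M 0 1))*hc4 + (8*a^2)*hb4 + (2*((M 2 1) - (M 1 2)) - 4*(M 2 1))*ha2 - 2*hR6 - 2*hC6 + 2*hK6 + 2*hK8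
  refine ⟨⟨a, b, c, d⟩, ?_, ?_⟩
  · refine (Quaternion.normSq_def' _).trans ?_
    exact hnorm
  · ext i j
    fin_cases i <;> fin_cases j <;>
      simp only [Bmat, Fin.mk_zero, Fin.mk_one, Fin.reduceFinMk, Matrix.cons_val',
        Matrix.cons_val_zero, Matrix.cons_val_one, Matrix.head_cons, Matrix.empty_val',
        Matrix.cons_val_fin_one, Matrix.head_fin_const, Matrix.of_apply, Fin.isValue,
        Matrix.cons_val_two, Matrix.tail_cons]
    · exact hE00
    · exact hE01
    · exact hE02
    · exact hE10
    · exact hE11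
    · exact hE12
    · exact hE20
    · exact hE21
    · exact hE22
lemma Bmat_neg_one : Bmat (⟨-1,0,0,0⟩ : H) = 1 := by
  ext i j
  fin_cases i <;> fin_cases j <;>
    simp [Bmat, Matrix.one_apply, Matrix.vecHead, Matrix.vecTail] <;> norm_num

open Matrix in
lemma exists_Bmat_eq (M : Matrix (Fin 3) (Fin 3) ℝ)
    (h1 : Mᵀ * M = 1) (h2 : M * Mᵀ = 1) (hdet : M.det = 1) :
    ∃ g : H, Quaternion.normSq g = 1 ∧ Bmat g = M := by
  have key : ∀ e : H, Quaternion.normSq e = 1 → e * e = ⟨-1,0,0,0⟩ →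
      0 < 1 + (Bmat e * M) 0 0 + (Bmat e * M) 1 1 + (Bmat e * M) 2 2 →
      ∃ g : H, Quaternion.normSq g = 1 ∧ Bmat g = M := by
    intro e he hee htr
    have hD1 : (Bmat e)ᵀ * Bmat e = 1 := Bmat_orth' he
    have hD2 : Bmat e * (Bmat e)ᵀ = 1 := Bmat_orth he
    have hDD : Bmat e * Bmat e = 1 := by
      rw [← Bmat_mul, hee, Bmat_neg_one]
    have h1' : (Bmat e * M)ᵀ * (Bmat e * M) = 1 := by
      rw [Matrix.transpose_mul, Matrix.mul_assoc, ← Matrix.mul_assoc ((Bmat e)ᵀ), hD1,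
        Matrix.one_mul, h1]
    have h2' : (Bmat e * M) * (Bmat e * M)ᵀ = 1 := by
      rw [Matrix.transpose_mul, Matrix.mul_assoc, ← Matrix.mul_assoc M, h2, Matrix.one_mul, hD2]
    have hdet' : (Bmat e * M).det = 1 := by
      rw [Matrix.det_mul, Bmat_det he, hdet, one_mul]
    obtain ⟨g, hg, hBg⟩ := exists_Bmat_eq_of_pos (Bmat e * M) h1' h2' hdet' htr
    refine ⟨e * g, ?_, ?_⟩
    · rw [_root_.map_mul Quaternion.normSq e g, he, hg, one_mul]
    · rw [Bmat_mul, hBg, ← Matrix.mul_assoc, hDD, Matrix.one_mul]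
  have hi : Quaternion.normSq (⟨0,1,0,0⟩ : H) = 1 := by refine (Quaternion.normSq_def' _).trans ?_; simp
  have hj : Quaternion.normSq (⟨0,0,1,0⟩ : H) = 1 := by refine (Quaternion.normSq_def' _).trans ?_; simp
  have hk : Quaternion.normSq (⟨0,0,0,1⟩ : H) = 1 := by refine (Quaternion.normSq_def' _).trans ?_; simp
  have hii : (⟨0,1,0,0⟩ : H) * ⟨0,1,0,0⟩ = ⟨-1,0,0,0⟩ := by
    rw [QuaternionAlgebra.mk_mul_mk]; norm_num
  have hjj : (⟨0,0,1,0⟩ : H) * ⟨0,0,1,0⟩ = ⟨-1,0,0,0⟩ := by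
    rw [QuaternionAlgebra.mk_mul_mk]; norm_num
  have hkk : (⟨0,0,0,1⟩ : H) * ⟨0,0,0,1⟩ = ⟨-1,0,0,0⟩ := by
    rw [QuaternionAlgebra.mk_mul_mk]; norm_num
  have ei : (Bmat (⟨0,1,0,0⟩ : H) * M) 0 0 = M 0 0 ∧ (Bmat (⟨0,1,0,0⟩ : H) * M) 1 1 = -(M 1 1) ∧
      (Bmat (⟨0,1,0,0⟩ : H) * M) 2 2 = -(M 2 2) := by
    refine ⟨?_, ?_, ?_⟩ <;>
      simp [Bmat, Matrix.mul_apply, Fin.sum_univ_three, Matrix.vecHead, Matrix.vecTail]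
  have ej : (Bmat (⟨0,0,1,0⟩ : H) * M) 0 0 = -(M 0 0) ∧ (Bmat (⟨0,0,1,0⟩ : H) * M) 1 1 = M 1 1 ∧
      (Bmat (⟨0,0,1,0⟩ : H) * M) 2 2 = -(M 2 2) := by
    refine ⟨?_, ?_, ?_⟩ <;>
      simp [Bmat, Matrix.mul_apply, Fin.sum_univ_three, Matrix.vecHead, Matrix.vecTail]
  have ek : (Bmat (⟨0,0,0,1⟩ : H) * M) 0 0 = -(M 0 0) ∧ (Bmat (⟨0,0,0,1⟩ : H) * M) 1 1 = -(M 1 1) ∧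
      (Bmat (⟨0,0,0,1⟩ : H) * M) 2 2 = M 2 2 := by
    refine ⟨?_, ?_, ?_⟩ <;>
      simp [Bmat, Matrix.mul_apply, Fin.sum_univ_three, Matrix.vecHead, Matrix.vecTail]
  rcases lt_or_ge 0 (1 + M 0 0 + M 1 1 + M 2 2) with hc1 | hc1
  · exact exists_Bmat_eq_of_pos M h1 h2 hdet hc1
  rcases lt_or_ge 0 (1 + M 0 0 - M 1 1 - M 2 2) with hc2 | hc2
  · refine key ⟨0,1,0,0⟩ hi hii ?_
    rw [ei.1, ei.2.1, ei.2.2]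
    linarith
  rcases lt_or_ge 0 (1 - M 0 0 + M 1 1 - M 2 2) with hc3 | hc3
  · refine key ⟨0,0,1,0⟩ hj hjj ?_
    rw [ej.1, ej.2.1, ej.2.2]
    linarith
  rcases lt_or_ge 0 (1 - M 0 0 - M 1 1 + M 2 2) with hc4 | hc4
  · refine key ⟨0,0,0,1⟩ hk hkk ?_
    rw [ek.1, ek.2.1, ek.2.2]
    linarith
  exfalso
  linarith
open Matrix in
lemma Bhom_surjective : Function.Surjective Bhom := by
  intro R
  set M : Matrix (Fin 3) (Fin 3) ℝ := ((R : ↥(Matrix.orthogonalGroup (Fin 3) ℝ)) :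
    Matrix (Fin 3) (Fin 3) ℝ) with hM
  have hmem : M ∈ Matrix.orthogonalGroup (Fin 3) ℝ := (R : ↥(Matrix.orthogonalGroup (Fin 3) ℝ)).2
  rw [Unitary.mem_iff] at hmem
  have h1 : Mᵀ * M = 1 := by
    have := hmem.1
    simpa [Matrix.star_eq_conjTranspose] using this
  have h2 : M * Mᵀ = 1 := by
    have := hmem.2
    simpa [Matrix.star_eq_conjTranspose] using this
  have hdet : M.det = 1 := R.2
  obtain ⟨g, hg, hBg⟩ := exists_Bmat_eq M h1 h2 hdet
  refine ⟨⟨g, mem_S3 g hg⟩, ?_⟩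
  exact Subtype.ext (Subtype.ext hBg)
/-- `B` induces a homeomorphism `φ : S³/Q₈ ≃ SO₃(ℝ)/T(ℝ)` of coset spaces
(with their quotient topologies) with `φ(qQ₈) = B(q)T(ℝ)` for every unit quaternion `q`. -/
theorem stmt6 :
    ∃ φ : (S3 ⧸ Q8) ≃ₜ (↥SO3 ⧸ Tdiag),
      ∀ (q : S3) (R : ↥SO3),
        (((R : ↥(Matrix.orthogonalGroup (Fin 3) ℝ)) : Matrix (Fin 3) (Fin 3) ℝ)
            = Bmat (q : H)) →
          φ (QuotientGroup.mk q) = QuotientGroup.mk R := by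
  have hcompat : ∀ x y : S3, QuotientGroup.leftRel Q8 x y →
      QuotientGroup.leftRel Tdiag (Bhom x) (Bhom y) := by
    intro x y hxy
    have hxy' : x⁻¹ * y ∈ Q8 := (QuotientGroup.leftRel_apply).mp hxy
    refine (QuotientGroup.leftRel_apply).mpr ?_
    have : (Bhom x)⁻¹ * Bhom y = Bhom (x⁻¹ * y) := by
      rw [map_mul, map_inv]
    rw [this]
    exact (Bhom_mem_Tdiag_iff _).mpr hxy'
  let φ0 : (S3 ⧸ Q8) → (↥SO3 ⧸ Tdiag) :=
    Quotient.map' (s₁ := QuotientGroup.leftRel Q8) (s₂ := QuotientGroup.leftRel Tdiag)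
      Bhom hcompat
  have hφ0mk : ∀ x : S3, φ0 (QuotientGroup.mk x) = QuotientGroup.mk (Bhom x) := fun x => rfl
  have hcont : Continuous φ0 := by
    rw [(QuotientGroup.isQuotientMap_mk Q8).continuous_iff]
    exact QuotientGroup.continuous_mk.comp Bhom_continuous
  have hbij : Function.Bijective φ0 := by
    constructor
    · intro z1 z2
      refine Quotient.inductionOn₂' z1 z2 ?_
      intro x y h
      have h' : (QuotientGroup.mk (Bhom x) : ↥SO3 ⧸ Tdiag) = QuotientGroup.mk (Bhom y) := h
      have hmem : (Bhom x)⁻¹ * Bhom y ∈ Tdiag := QuotientGroup.eq.mp h'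
      rw [← map_inv, ← map_mul] at hmem
      have : x⁻¹ * y ∈ Q8 := (Bhom_mem_Tdiag_iff _).mp hmem
      exact Quotient.sound' ((QuotientGroup.leftRel_apply).mpr this)
    · intro z
      refine Quotient.inductionOn' z ?_
      intro R
      obtain ⟨x, hx⟩ := Bhom_surjective R
      exact ⟨QuotientGroup.mk x, by rw [hφ0mk, hx]⟩
  haveI : T2Space (↥SO3 ⧸ Tdiag) := t2_quot
  let φ : (S3 ⧸ Q8) ≃ₜ (↥SO3 ⧸ Tdiag) :=
    Continuous.homeoOfEquivCompactToT2 (f := Equiv.ofBijective φ0 hbij) hcont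
  refine ⟨φ, ?_⟩
  intro q R hR
  have hBq : Bhom q = R := Subtype.ext (Subtype.ext hR.symm)
  show φ0 (QuotientGroup.mk q) = QuotientGroup.mk R
  rw [hφ0mk, hBq]

end
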